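/- On ℝ⁴ with coordinates (x₁,x₂,x₃,x₄), the vector field U = e^{-2x₃}∂_{x₄} is a null Killing field for the metric g = (e^{-4x₂+4x₃} - 1)dx₁² + e^{-2x₂+2x₃}(dx₁dx₄ + dx₄dx₁) + dx₂² + dx₃² + 2x₄e^{-2x₂+2x₃}(dx₃dx₁ + dx₁dx₃). -/

import Mathlib

open Matrix

/-- Partial derivative in the i-th coordinate direction on ℝ⁴. -/
noncomputable def pd (i : Fin 4) (f : (Fin 4 → ℝ) → ℝ) (x : Fin 4 → ℝ) : ℝ :=
  fderiv ℝ f x (Pi.single i 1)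

/-- The non-reductive Gödel-type metric
g = (e^{-4x₂+4x₃}-1)dx₁² + e^{-2x₂+2x₃}(dx₁dx₄+dx₄dx₁) + dx₂² + dx₃²
  + 2x₄e^{-2x₂+2x₃}(dx₃dx₁+dx₁dx₃), coordinates (x₁,x₂,x₃,x₄) = (p 0,...,p 3). -/
noncomputable def nonredG (p : Fin 4 → ℝ) : Matrix (Fin 4) (Fin 4) ℝ :=
  !![Real.exp (-4 * p 1 + 4 * p 2) - 1, 0,
       2 * p 3 * Real.exp (-2 * p 1 + 2 * p 2), Real.exp (-2 * p 1 + 2 * p 2);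
     0, 1, 0, 0;
     2 * p 3 * Real.exp (-2 * p 1 + 2 * p 2), 0, 1, 0;
     Real.exp (-2 * p 1 + 2 * p 2), 0, 0, 0]

/-- Coordinate Lie derivative of a metric along a vector field. -/
noncomputable def lieD (g : (Fin 4 → ℝ) → Matrix (Fin 4) (Fin 4) ℝ)
    (X : (Fin 4 → ℝ) → Fin 4 → ℝ) (p : Fin 4 → ℝ) (i j : Fin 4) : ℝ :=
  (∑ k, X p k * pd k (fun y => g y i j) p)
  + (∑ k, g p k j * pd i (fun y => X y k) p)
  + (∑ k, g p i k * pd j (fun y => X y k) p)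

/-- The vector field U = e^{-2x₃}∂_{x₄}. -/
noncomputable def Unr : (Fin 4 → ℝ) → Fin 4 → ℝ := fun p =>
  ![0, 0, 0, Real.exp (-2 * p 2)]

lemma hasL (a b : ℝ) (p : Fin 4 → ℝ) :
    HasFDerivAt (fun y : Fin 4 → ℝ => a * y 1 + b * y 2)
      (a • (ContinuousLinearMap.proj 1 : (Fin 4 → ℝ) →L[ℝ] ℝ) + b • ContinuousLinearMap.proj 2) p :=
  (((ContinuousLinearMap.proj 1 : (Fin 4 → ℝ) →L[ℝ] ℝ).hasFDerivAt (x := p)).const_mul a).add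
    (((ContinuousLinearMap.proj 2 : (Fin 4 → ℝ) →L[ℝ] ℝ).hasFDerivAt (x := p)).const_mul b)

lemma pd_exp (a b : ℝ) (k : Fin 4) (p : Fin 4 → ℝ) :
    pd k (fun y => Real.exp (a * y 1 + b * y 2)) p
    = Real.exp (a * p 1 + b * p 2) *
        (a * (Pi.single k (1:ℝ) : Fin 4 → ℝ) 1 + b * (Pi.single k (1:ℝ) : Fin 4 → ℝ) 2) := by
  rw [pd, (hasL a b p).exp.fderiv]
  simp [mul_comm]
  ring

lemma pd_exp_sub_one (a b : ℝ) (k : Fin 4) (p : Fin 4 → ℝ) :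
    pd k (fun y => Real.exp (a * y 1 + b * y 2) - 1) p
    = Real.exp (a * p 1 + b * p 2) *
        (a * (Pi.single k (1:ℝ) : Fin 4 → ℝ) 1 + b * (Pi.single k (1:ℝ) : Fin 4 → ℝ) 2) := by
  rw [pd, ((hasL a b p).exp.sub_const 1).fderiv]
  simp [mul_comm]
  ring

lemma pd_mul_exp (a b : ℝ) (k : Fin 4) (p : Fin 4 → ℝ) :
    pd k (fun y => 2 * y 3 * Real.exp (a * y 1 + b * y 2)) p
    = 2 * p 3 * (Real.exp (a * p 1 + b * p 2) *
        (a * (Pi.single k (1:ℝ) : Fin 4 → ℝ) 1 + b * (Pi.single k (1:ℝ) : Fin 4 → ℝ) 2))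
      + Real.exp (a * p 1 + b * p 2) * (2 * (Pi.single k (1:ℝ) : Fin 4 → ℝ) 3) := by
  have h3 : HasFDerivAt (fun y : Fin 4 → ℝ => 2 * y 3)
      ((2:ℝ) • (ContinuousLinearMap.proj 3 : (Fin 4 → ℝ) →L[ℝ] ℝ)) p :=
    ((ContinuousLinearMap.proj 3 : (Fin 4 → ℝ) →L[ℝ] ℝ).hasFDerivAt (x := p)).const_mul 2
  rw [pd, (show HasFDerivAt (fun y : Fin 4 → ℝ => 2 * y 3 * Real.exp (a * y 1 + b * y 2)) _ p
    from h3.mul (hasL a b p).exp).fderiv]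
  simp [mul_comm, mul_left_comm]
  ring

lemma pd_exp2 (c : ℝ) (k : Fin 4) (p : Fin 4 → ℝ) :
    pd k (fun y => Real.exp (c * y 2)) p
    = Real.exp (c * p 2) * (c * (Pi.single k (1:ℝ) : Fin 4 → ℝ) 2) := by
  have h : HasFDerivAt (fun y : Fin 4 → ℝ => c * y 2)
      (c • (ContinuousLinearMap.proj 2 : (Fin 4 → ℝ) →L[ℝ] ℝ)) p :=
    ((ContinuousLinearMap.proj 2 : (Fin 4 → ℝ) →L[ℝ] ℝ).hasFDerivAt (x := p)).const_mul c
  rw [pd, h.exp.fderiv]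
  simp [mul_comm]

lemma pd_const (c : ℝ) (k : Fin 4) (p : Fin 4 → ℝ) :
    pd k (fun _ => c) p = 0 := by
  simp [pd]

/-- U = e^{-2x₃}∂_{x₄} is a null Killing field for the non-reductive
Gödel-type metric. -/
theorem nonred_null_killing :
    (∀ p i j, lieD nonredG Unr p i j = 0) ∧
    (∀ p : Fin 4 → ℝ, (∑ i, ∑ j, nonredG p i j * Unr p i * Unr p j) = 0) := by
  have hfin : ∀ i : Fin 4, i = 0 ∨ i = 1 ∨ i = 2 ∨ i = 3 := by decide
  constructor
  · intro p i j
    rcases hfin i with rfl | rfl | rfl | rfl <;> rcases hfin j with rfl | rfl | rfl | rfl <;>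
    · simp only [lieD, Fin.sum_univ_four, nonredG, Unr, Matrix.cons_val_zero,
        Matrix.cons_val_one, Matrix.head_cons, Matrix.cons_val_two, Matrix.tail_cons,
        Matrix.cons_val_three, Matrix.head_fin_const, Matrix.of_apply, Matrix.cons_val',
        Matrix.cons_val_fin_one, Matrix.empty_val', Fin.isValue]
      simp only [pd_exp, pd_exp_sub_one, pd_mul_exp, pd_exp2, pd_const,
        Pi.single_apply, Fin.isValue]
      simp [Pi.single_apply]
      try ring
  · intro p
    simp [Fin.sum_univ_four, nonredG, Unr, Matrix.vecHead, Matrix.vecTail]
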